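/- Let k be a field of characteristic 0, A and B numerical semigroup algebras of numerical semigroups 𝒜, ℬ inside K = k[t,t⁻¹], and for d ∈ ℤ define ℓ_d(x) := ∏_{b ∈ Z_d(ℬ,𝒜)} (x − b) ∈ k[x]. Then under the identification 𝒟_K ≅ k[x] # ℤ, the set of differential operators D of degree d with D(B) ⊆ A equals I_d(ℬ,𝒜) # t^d, where I_d(ℬ,𝒜) = ⟨ℓ_d⟩ is the ideal of polynomials vanishing on Z_d(ℬ,𝒜). -/

import Mathlib

open Polynomial LaurentPolynomial

/-- `D` is a differential operator of order at most `n` on the commutative `k`-algebra `K`. -/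
def IsDiffOp (k K : Type*) [CommSemiring k] [CommRing K] [Algebra k K] :
    ℕ → (K →ₗ[k] K) → Prop
  | 0, D => ∃ u : K, ∀ x, D x = u * x
  | n + 1, D => ∀ a : K,
      IsDiffOp k K n (D ∘ₗ LinearMap.mulLeft k a - LinearMap.mulLeft k a ∘ₗ D)

/-- The operator `f # t^d` on `K = k[t,t⁻¹]`, acting by `t^a ↦ f(a) • t^{d+a}`. -/
noncomputable def Phi (k : Type*) [Field k] (f : Polynomial k) (d : ℤ) :
    LaurentPolynomial k →ₗ[k] LaurentPolynomial k :=
  (Finsupp.lsum k fun a : ℤ =>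
    LinearMap.toSpanSingleton k (LaurentPolynomial k)
      (f.eval (a : k) • LaurentPolynomial.T (d + a))) ∘ₗ
    (AddMonoidAlgebra.coeffLinearEquiv k).toLinearMap

/-- A numerical semigroup: an additive submonoid of `ℕ` with finite complement. -/
def IsNumericalSemigroup (A : AddSubmonoid ℕ) : Prop :=
  ((A : Set ℕ)ᶜ).Finite

/-- The semigroup algebra `k[𝒜] ⊆ k[t,t⁻¹]` of a numerical semigroup. -/
noncomputable def sgAlg (k : Type*) [Field k] (A : AddSubmonoid ℕ) :
    Submodule k (LaurentPolynomial k) :=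
  Submodule.span k {x | ∃ a ∈ A, x = LaurentPolynomial.T (a : ℤ)}

lemma Phi_T (k : Type*) [Field k] (f : Polynomial k) (d a : ℤ) :
    Phi k f d (LaurentPolynomial.T a) = f.eval (a : k) • LaurentPolynomial.T (d + a) := by
  have h : Phi k f d (LaurentPolynomial.T a) =
      (Finsupp.lsum k fun a : ℤ => LinearMap.toSpanSingleton k (LaurentPolynomial k)
        (f.eval (a : k) • LaurentPolynomial.T (d + a))) (Finsupp.single a 1) := rfl
  rw [h, Finsupp.lsum_single, LinearMap.toSpanSingleton_apply_one]

lemma sgAlg_coeff_zero (k : Type*) [Field k] (A : AddSubmonoid ℕ) (m : ℤ)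
    (hm : ¬ ∃ a ∈ A, m = (a : ℤ)) (x : LaurentPolynomial k) (hx : x ∈ sgAlg k A) :
    (AddMonoidAlgebra.coeff x) m = 0 := by
  induction hx using Submodule.span_induction with
  | mem y hy =>
    obtain ⟨a, ha, rfl⟩ := hy
    rw [show AddMonoidAlgebra.coeff (LaurentPolynomial.T (a : ℤ) : LaurentPolynomial k)
        = Finsupp.single (a : ℤ) 1 from rfl, Finsupp.single_apply, if_neg]
    intro h
    exact hm ⟨a, ha, h.symm⟩
  | zero => rfl
  | add y z _ _ hy hz =>
    show AddMonoidAlgebra.coeff (y + z) m = 0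
    rw [AddMonoidAlgebra.coeff_add, Finsupp.add_apply, hy, hz, add_zero]
  | smul c y _ hy =>
    show AddMonoidAlgebra.coeff (c • y) m = 0
    rw [AddMonoidAlgebra.coeff_smul, Finsupp.smul_apply, hy, smul_zero]

/-- A degree-`d` differential operator `f # t^d` maps `B` into `A` iff its
polynomial `f` vanishes on `Z_d(ℬ,𝒜)`, i.e. `f ∈ I_d(ℬ,𝒜)`. -/
theorem diffOps_of_degree_d_from_B_to_A (k : Type*) [Field k] [CharZero k]
    (A B : AddSubmonoid ℕ)
    (hA : IsNumericalSemigroup A) (hB : IsNumericalSemigroup B)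
    (d : ℤ) (f : Polynomial k) :
    (∀ x ∈ sgAlg k B, Phi k f d x ∈ sgAlg k A) ↔
      (∀ b : ℕ, b ∈ B → (¬ ∃ a ∈ A, (b : ℤ) + d = (a : ℤ)) → f.eval (b : k) = 0) := by
  constructor
  · intro h b hb hz
    have hTb : (LaurentPolynomial.T (b : ℤ) : LaurentPolynomial k) ∈ sgAlg k B :=
      Submodule.subset_span ⟨b, hb, rfl⟩
    have hmem := h _ hTb
    rw [Phi_T] at hmem
    have hc := sgAlg_coeff_zero k A (d + (b : ℤ))
      (by simpa [add_comm] using hz) _ hmem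
    have hval : (AddMonoidAlgebra.coeff (f.eval (((b : ℤ) : k)) • LaurentPolynomial.T (d + (b : ℤ)) :
        LaurentPolynomial k)) (d + (b : ℤ)) = f.eval (((b : ℤ) : k)) := by
      have heq : (AddMonoidAlgebra.coeff (f.eval (((b : ℤ) : k)) • LaurentPolynomial.T (d + (b : ℤ)) :
          LaurentPolynomial k))
          = f.eval (((b : ℤ) : k)) • (Finsupp.single (d + (b : ℤ)) 1 : ℤ →₀ k) := rfl
      rw [heq, Finsupp.smul_apply, Finsupp.single_apply, if_pos rfl, smul_eq_mul, mul_one]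
    rw [hval] at hc
    have : ((b : ℤ) : k) = (b : k) := by push_cast; rfl
    rwa [this] at hc
  · intro h x hx
    induction hx using Submodule.span_induction with
    | mem y hy =>
      obtain ⟨b, hb, rfl⟩ := hy
      rw [Phi_T]
      by_cases hz : ∃ a ∈ A, (b : ℤ) + d = (a : ℤ)
      · obtain ⟨a, ha, hab⟩ := hz
        have hda : (d + (b : ℤ)) = (a : ℤ) := by omega
        rw [hda]
        exact Submodule.smul_mem _ _ (Submodule.subset_span ⟨a, ha, rfl⟩)
      · have hcast : ((b : ℤ) : k) = (b : k) := by push_cast; rfl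
        rw [hcast, h b hb hz, zero_smul]
        exact Submodule.zero_mem _
    | zero => rw [map_zero]; exact Submodule.zero_mem _
    | add y z _ _ hy hz => rw [map_add]; exact Submodule.add_mem _ hy hz
    | smul c y _ hy => rw [map_smul]; exact Submodule.smul_mem _ _ hy
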